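/- For a set Z and a semigroup T, every element of the quotient semigroup S̃(T ⊔ Z) (the free semigroup on the disjoint union of the underlying set of T with Z, modulo identifying the product of two elements of T in the free semigroup with their product in T) has a unique expression of the form a₀t₁a₁t₂⋯tₙaₙ where n ≥ 0, each tᵢ ∈ T, each aᵢ is either a word in the free semigroup S(Z) or the empty word, with the constraints that for n ≥ 2 none of a₁,…,a_{n−1} is empty, and for n = 0 the word a₀ is nonempty. -/

import Mathlib

/- The semigroup S̃(T ⊔ Z): quotient of the free semigroup on T ⊔ Z by the congruence
identifying products of elements of T computed in the free semigroup with their products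
in T, and its normal forms. -/

namespace Stmt1

variable (T Z : Type*) [Semigroup T]

/-- The defining relation of `S̃(T ⊔ Z)`. -/
def rel : FreeSemigroup (T ⊕ Z) → FreeSemigroup (T ⊕ Z) → Prop := fun x y =>
  ∃ t t' : T, x = FreeSemigroup.of (Sum.inl t) * FreeSemigroup.of (Sum.inl t') ∧
    y = FreeSemigroup.of (Sum.inl (t * t'))

/-- The smallest semigroup congruence containing the defining relation. -/
def con : Con (FreeSemigroup (T ⊕ Z)) := conGen (rel T Z)

/-- The quotient semigroup `S̃(T ⊔ Z)`. -/
def STilde := (con T Z).Quotient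

instance : Semigroup (STilde T Z) := Con.semigroup (con T Z)

/-- The image of `t ∈ T` in `S̃(T ⊔ Z)`. -/
def ofT (t : T) : STilde T Z := ((FreeSemigroup.of (Sum.inl t) : FreeSemigroup (T ⊕ Z)) :
  (con T Z).Quotient)

/-- The image of a word of `S(Z)` in `S̃(T ⊔ Z)`. -/
def ofW (w : FreeSemigroup Z) : STilde T Z :=
  ((FreeSemigroup.map Sum.inr w : FreeSemigroup (T ⊕ Z)) : (con T Z).Quotient)

/-- Multiplication on `Option S`, with `none` (the empty word) acting as a unit. -/
def optMul {S : Type*} [Semigroup S] : Option S → Option S → Option S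
  | none, y => y
  | some a, none => some a
  | some a, some b => some (a * b)


set_option linter.unusedSectionVars false

section Lists
variable {A B : Type*} [Semigroup A] [Semigroup B]

/-- prepend a letter to a list, merging with the head if of the same type -/
def glue (x : A ⊕ B) (l : List (A ⊕ B)) : List (A ⊕ B) :=
  match x, l with
  | a, [] => [a]
  | .inl w, .inl w' :: m => .inl (w * w') :: m
  | .inl w, .inr t :: m => .inl w :: .inr t :: m
  | .inr t, .inl w :: m => .inr t :: .inl w :: m
  | .inr t, .inr t' :: m => .inr (t * t') :: m

/-- reduced concatenation -/
def mulL : List (A ⊕ B) → List (A ⊕ B) → List (A ⊕ B)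
  | [], m => m
  | [a], m => glue a m
  | a :: b :: l, m => a :: mulL (b :: l) m

@[simp] theorem nil_mulL (m : List (A ⊕ B)) : mulL [] m = m := rfl

@[simp] theorem glue_nil (a : A ⊕ B) : glue a [] = [a] := by rcases a with w | t <;> rfl

theorem single_mulL (a : A ⊕ B) (m : List (A ⊕ B)) : mulL [a] m = glue a m := rfl

theorem cons_cons_mulL (a b : A ⊕ B) (l m : List (A ⊕ B)) :
    mulL (a :: b :: l) m = a :: mulL (b :: l) m := rfl

@[simp] theorem mulL_nil (l : List (A ⊕ B)) : mulL l [] = l := by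
  induction l with
  | nil => rfl
  | cons a l ih =>
    cases l with
    | nil => simp [single_mulL]
    | cons b l' => simpa [mulL] using ih

theorem glue_ne_nil (a : A ⊕ B) (m : List (A ⊕ B)) : glue a m ≠ [] := by
  rcases a with w | t <;> rcases m with _ | ⟨c | c, m⟩ <;> simp [glue]

theorem mulL_ne_nil (l m : List (A ⊕ B)) (hl : l ≠ []) : mulL l m ≠ [] := by
  cases l with
  | nil => exact absurd rfl hl
  | cons a l =>
    cases l with
    | nil => exact glue_ne_nil a m
    | cons b l' => simp [cons_cons_mulL]

theorem glue_glue (a b : A ⊕ B) (m : List (A ⊕ B)) :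
    glue a (glue b m) = mulL (glue a [b]) m := by
  rcases a with w | t <;> rcases b with w' | t' <;> rcases m with _ | ⟨c, m⟩ <;>
    first
    | rfl
    | (rcases c with w'' | t'' <;> simp [glue, mulL, mul_assoc])

theorem mulL_glue (a : A ⊕ B) (m n : List (A ⊕ B)) :
    mulL (glue a m) n = glue a (mulL m n) := by
  induction m generalizing a with
  | nil => simp [single_mulL]
  | cons b m ih =>
    cases m with
    | nil =>
      rw [show mulL (b :: []) n = glue b n from rfl, glue_glue]
    | cons c m' =>
      rcases a with w | t <;> rcases b with w' | t' <;>
        simp [glue, mulL, ih, mulL_glue]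

theorem mulL_assoc (l m n : List (A ⊕ B)) :
    mulL (mulL l m) n = mulL l (mulL m n) := by
  induction l with
  | nil => rfl
  | cons a l ih =>
    cases l with
    | nil => exact mulL_glue a m n
    | cons b l' =>
      cases m with
      | nil => simp
      | cons c m' =>
        rw [cons_cons_mulL]
        obtain ⟨y, l'', hy⟩ : ∃ y l'', mulL (b :: l') (c :: m') = y :: l'' :=
          List.exists_cons_of_ne_nil (mulL_ne_nil _ _ (by simp))
        rw [hy, show mulL (a :: y :: l'') n = a :: mulL (y :: l'') n from rfl, ← hy, ih]
        obtain ⟨z, n'', hz⟩ : ∃ z n'', mulL (c :: m') n = z :: n'' :=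
          List.exists_cons_of_ne_nil (mulL_ne_nil _ _ (by simp))
        rw [hz]
        rfl

end Lists

section Eval
variable {T Z}

/-- letters of reduced words -/
abbrev X := FreeSemigroup Z ⊕ T

def gen : T ⊕ Z → List (X (T := T) (Z := Z))
  | .inl t => [.inr t]
  | .inr z => [.inl (.of z)]

theorem foldr_mulL (L : List (List (X (T := T) (Z := Z)))) (r : List X) :
    L.foldr mulL r = mulL (L.foldr mulL []) r := by
  induction L with
  | nil => rfl
  | cons l L ih => rw [List.foldr_cons, List.foldr_cons, ih, mulL_assoc]

def F0 (l : List (T ⊕ Z)) : List (X (T := T) (Z := Z)) := (l.map gen).foldr mulL []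

theorem F0_append (l₁ l₂ : List (T ⊕ Z)) : F0 (l₁ ++ l₂) = mulL (F0 l₁) (F0 l₂) := by
  unfold F0
  rw [List.map_append, List.foldr_append, foldr_mulL]

/-- decoding of free-semigroup elements into reduced words -/
def D (w : FreeSemigroup (T ⊕ Z)) : List (X (T := T) (Z := Z)) := F0 (w.head :: w.tail)

theorem D_of (x : T ⊕ Z) : D (FreeSemigroup.of x) = gen x := by
  show mulL (gen x) _ = gen x
  simp

theorem D_mul (u v : FreeSemigroup (T ⊕ Z)) : D (u * v) = mulL (D u) (D v) := by
  show F0 (u.head :: (u.tail ++ v.head :: v.tail)) = _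
  rw [show u.head :: (u.tail ++ v.head :: v.tail) = (u.head :: u.tail) ++ (v.head :: v.tail)
    from rfl, F0_append]
  rfl

theorem D_rel {a b : FreeSemigroup (T ⊕ Z)} (h : con T Z a b) : D a = D b := by
  change ConGen.Rel (rel T Z) a b at h
  induction h with
  | of x y hxy =>
    obtain ⟨t, t', rfl, rfl⟩ := hxy
    rw [D_mul, D_of, D_of]
    rfl
  | refl => rfl
  | symm _ ih => exact ih.symm
  | trans _ _ ih1 ih2 => exact ih1.trans ih2
  | mul _ _ ih1 ih2 => rw [D_mul, D_mul, ih1, ih2]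

/-- decoding of S̃ elements into reduced words -/
def d (s : STilde T Z) : List (X (T := T) (Z := Z)) :=
  Con.liftOn s D fun _ _ h => D_rel h

theorem d_mk (w : FreeSemigroup (T ⊕ Z)) : d (w : (con T Z).Quotient) = D w := rfl

theorem d_mul (s₁ s₂ : STilde T Z) : d (s₁ * s₂) = mulL (d s₁) (d s₂) := by
  induction s₁ using Con.induction_on with
  | H a =>
    induction s₂ using Con.induction_on with
    | H b =>
      show d (((a * b : FreeSemigroup (T ⊕ Z)) : (con T Z).Quotient)) = _
      rw [d_mk, d_mk, d_mk, D_mul]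

def atom : X (T := T) (Z := Z) → STilde T Z := Sum.elim (ofW T Z) (ofT T Z)

/-- fold of optMul -/
def F (L : List (Option (STilde T Z))) : Option (STilde T Z) := L.foldr optMul none

theorem optMul_assoc {S : Type*} [Semigroup S] (x y z : Option S) :
    optMul (optMul x y) z = optMul x (optMul y z) := by
  rcases x with _ | x <;> rcases y with _ | y <;> rcases z with _ | z <;>
    simp [optMul, mul_assoc]

theorem F_append (L₁ L₂ : List (Option (STilde T Z))) :
    F (L₁ ++ L₂) = optMul (F L₁) (F L₂) := by
  induction L₁ with
  | nil => rfl
  | cons o L ih =>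
    show optMul o (F (L ++ L₂)) = optMul (optMul o (F L)) (F L₂)
    rw [ih, optMul_assoc]

/-- evaluation of reduced words back into S̃ -/
def E (l : List (X (T := T) (Z := Z))) : Option (STilde T Z) :=
  F (l.map fun x => some (atom x))

theorem E_nil : E ([] : List (X (T := T) (Z := Z))) = none := rfl

theorem E_cons (x : X (T := T) (Z := Z)) (l : List X) :
    E (x :: l) = optMul (some (atom x)) (E l) := rfl

theorem E_single (x : X (T := T) (Z := Z)) : E [x] = some (atom x) := rfl

theorem E_append (l₁ l₂ : List (X (T := T) (Z := Z))) :
    E (l₁ ++ l₂) = optMul (E l₁) (E l₂) := by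
  unfold E
  rw [List.map_append, F_append]

theorem E_isSome {l : List (X (T := T) (Z := Z))} (h : l ≠ []) : (E l).isSome := by
  cases l with
  | nil => exact absurd rfl h
  | cons x l =>
    rw [E_cons]
    cases E l <;> simp [optMul]

theorem ofW_mul (w w' : FreeSemigroup Z) :
    ofW T Z (w * w') = ofW T Z w * ofW T Z w' := by
  unfold ofW
  rw [map_mul, Con.coe_mul]
  rfl

theorem ofT_mul (t t' : T) : ofT T Z t * ofT T Z t' = ofT T Z (t * t') := by
  unfold ofT
  show ((FreeSemigroup.of (Sum.inl t) * FreeSemigroup.of (Sum.inl t') : FreeSemigroup (T ⊕ Z)) : (con T Z).Quotient) = _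
  exact (Con.eq _).2 (ConGen.Rel.of _ _ ⟨t, t', rfl, rfl⟩)

theorem E_glue (x : X (T := T) (Z := Z)) (m : List X) :
    E (glue x m) = optMul (some (atom x)) (E m) := by
  rcases m with _ | ⟨y, m⟩
  · rw [glue_nil]; rfl
  · rcases x with w | t <;> rcases y with w' | t'
    · show E (Sum.inl (w * w') :: m) = _
      rw [E_cons, E_cons, ← optMul_assoc]
      congr 1
      simp [optMul, atom, ofW_mul]
    · show E (Sum.inl w :: Sum.inr t' :: m) = _
      rw [E_cons]
    · show E (Sum.inr t :: Sum.inl w' :: m) = _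
      rw [E_cons]
    · show E (Sum.inr (t * t') :: m) = _
      rw [E_cons, E_cons, ← optMul_assoc]
      congr 1
      simp [optMul, atom, ofT_mul]

theorem E_mulL (l m : List (X (T := T) (Z := Z))) :
    E (mulL l m) = optMul (E l) (E m) := by
  induction l with
  | nil => rfl
  | cons a l ih =>
    cases l with
    | nil => rw [single_mulL, E_glue, E_single]
    | cons b l' =>
      rw [cons_cons_mulL, E_cons, ih]
      simp [E_cons, optMul_assoc]

theorem E_D (w : FreeSemigroup (T ⊕ Z)) :
    E (D w) = some ((w : (con T Z).Quotient) : STilde T Z) := by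
  induction w using FreeSemigroup.recOnMul with
  | ih1 x =>
    rw [D_of]
    rcases x with t | z
    · rfl
    · show some (ofW T Z (FreeSemigroup.of z)) = _
      unfold ofW
      rw [FreeSemigroup.map_of]
      rfl
  | ih2 x y h1 h2 =>
    rw [D_mul, E_mulL, h1, h2, Con.coe_mul]
    rfl

theorem E_d (s : STilde T Z) : E (d s) = some s := by
  induction s using Con.induction_on with
  | H w => rw [d_mk]; exact E_D w

theorem d_atom (x : X (T := T) (Z := Z)) : d (atom x) = [x] := by
  rcases x with w | t
  · show d (ofW T Z w) = _
    unfold ofW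
    rw [d_mk]
    induction w using FreeSemigroup.recOnMul with
    | ih1 z => rw [FreeSemigroup.map_of, D_of]; rfl
    | ih2 u v h1 h2 =>
      rw [map_mul, D_mul, h1, h2]
      rfl
  · rfl

end Eval

section Alt
variable {T Z}

/-- alternating lists -/
def Alt (l : List (X (T := T) (Z := Z))) : Prop :=
  List.Chain' (fun x y => x.isLeft ≠ y.isLeft) l

theorem Alt_nil : Alt ([] : List (X (T := T) (Z := Z))) := List.isChain_nil

theorem Alt_single (x : X (T := T) (Z := Z)) : Alt [x] := List.isChain_singleton x

theorem Alt.tail {x : X (T := T) (Z := Z)} {l : List X} (h : Alt (x :: l)) : Alt l :=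
  List.IsChain.tail h

theorem mulL_cons_head (b : X (T := T) (Z := Z)) (l m : List X) :
    ∃ y l'', mulL (b :: l) m = y :: l'' ∧ y.isLeft = b.isLeft := by
  cases l with
  | cons c l' => exact ⟨b, _, cons_cons_mulL b c l' m, rfl⟩
  | nil =>
    rw [single_mulL]
    rcases m with _ | ⟨c, m'⟩
    · exact ⟨b, [], by rw [glue_nil], rfl⟩
    · rcases b with w | t <;> rcases c with w' | t'
      · exact ⟨.inl (w * w'), m', rfl, rfl⟩
      · exact ⟨.inl w, _, rfl, rfl⟩
      · exact ⟨.inr t, _, rfl, rfl⟩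
      · exact ⟨.inr (t * t'), m', rfl, rfl⟩

theorem Alt_glue (a : X (T := T) (Z := Z)) {m : List X} (hm : Alt m) : Alt (glue a m) := by
  rcases m with _ | ⟨b, m'⟩
  · rw [glue_nil]; exact Alt_single a
  · rcases a with w | t <;> rcases b with w' | t'
    · show Alt (Sum.inl (w * w') :: m')
      rcases m' with _ | ⟨c, m''⟩
      · exact Alt_single _
      · exact List.isChain_cons_cons.2 ⟨(List.isChain_cons_cons.1 hm).1, (List.isChain_cons_cons.1 hm).2⟩
    · exact List.isChain_cons_cons.2 ⟨by simp, hm⟩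
    · exact List.isChain_cons_cons.2 ⟨by simp, hm⟩
    · show Alt (Sum.inr (t * t') :: m')
      rcases m' with _ | ⟨c, m''⟩
      · exact Alt_single _
      · exact List.isChain_cons_cons.2 ⟨(List.isChain_cons_cons.1 hm).1, (List.isChain_cons_cons.1 hm).2⟩

theorem Alt_mulL {l m : List (X (T := T) (Z := Z))} (hl : Alt l) (hm : Alt m) :
    Alt (mulL l m) := by
  induction l with
  | nil => exact hm
  | cons a l ih =>
    cases l with
    | nil => rw [single_mulL]; exact Alt_glue a hm
    | cons b l' =>
      rw [cons_cons_mulL]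
      obtain ⟨y, l'', h1, h2⟩ := mulL_cons_head b l' m
      rw [h1]
      refine List.isChain_cons_cons.2 ⟨?_, h1 ▸ ih hl.tail⟩
      rw [h2]
      exact (List.isChain_cons_cons.1 hl).1

theorem d_ne_nil_alt (s : STilde T Z) : d s ≠ [] ∧ Alt (d s) := by
  induction s using Con.induction_on with
  | H w =>
    rw [d_mk]
    induction w using FreeSemigroup.recOnMul with
    | ih1 x =>
      rw [D_of]
      rcases x with t | z <;> exact ⟨by simp [gen], Alt_single _⟩
    | ih2 x y h1 h2 =>
      rw [D_mul]
      exact ⟨mulL_ne_nil _ _ h1.1, Alt_mulL h1.2 h2.2⟩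

theorem glue_of_ne {x y : X (T := T) (Z := Z)} (l : List X) (h : x.isLeft ≠ y.isLeft) :
    glue x (y :: l) = x :: y :: l := by
  rcases x with w | t <;> rcases y with w' | t' <;> first | rfl | simp at h

theorem d_of_E {l : List (X (T := T) (Z := Z))} (hl : Alt l) {s : STilde T Z}
    (h : E l = some s) : d s = l := by
  induction l generalizing s with
  | nil => simp [E_nil] at h
  | cons x l ih =>
    cases l with
    | nil =>
      rw [E_single] at h
      obtain rfl : atom x = s := Option.some_injective _ h
      exact d_atom x
    | cons y l' =>
      obtain ⟨s', hs'⟩ := Option.isSome_iff_exists.1 (E_isSome (l := y :: l') (by simp))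
      rw [E_cons, hs'] at h
      obtain rfl : atom x * s' = s := Option.some_injective _ h
      rw [d_mul, d_atom, ih hl.tail hs', single_mulL,
        glue_of_ne _ (List.isChain_cons_cons.1 hl).1]

end Alt

section Parse
variable {T Z}

def optL : Option (FreeSemigroup Z) → List (X (T := T) (Z := Z))
  | none => []
  | some w => [.inl w]

def flatP (m : List (T × Option (FreeSemigroup Z))) : List (X (T := T) (Z := Z)) :=
  (m.map fun p => .inr p.1 :: optL p.2).flatten

/-- the alternating list encoded by a pre-normal-form -/
def toListP (o : Option (FreeSemigroup Z)) (m : List (T × Option (FreeSemigroup Z))) :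
    List (X (T := T) (Z := Z)) := optL o ++ flatP m

def wmul (w : FreeSemigroup Z) : Option (FreeSemigroup Z) → Option (FreeSemigroup Z)
  | none => some w
  | some v => some (w * v)

def step (x : X (T := T) (Z := Z))
    (p : Option (FreeSemigroup Z) × List (T × Option (FreeSemigroup Z))) :
    Option (FreeSemigroup Z) × List (T × Option (FreeSemigroup Z)) :=
  match x with
  | .inl w => (wmul w p.1, p.2)
  | .inr t => (none, (t, p.1) :: p.2)

/-- parsing an alternating list into a pre-normal-form -/
def Psi (l : List (X (T := T) (Z := Z))) :
    Option (FreeSemigroup Z) × List (T × Option (FreeSemigroup Z)) :=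
  l.foldr step (none, [])

theorem Psi_cons (x : X (T := T) (Z := Z)) (l : List X) :
    Psi (x :: l) = step x (Psi l) := rfl

theorem flatP_cons (t : T) (o : Option (FreeSemigroup Z)) (m : List (T × _)) :
    flatP ((t, o) :: m) = .inr t :: (optL o ++ flatP m) := rfl

theorem Psi_optL_append (o : Option (FreeSemigroup Z)) (l : List (X (T := T) (Z := Z)))
    (h : (Psi l).1 = none) : Psi (optL o ++ l) = (o, (Psi l).2) := by
  cases o with
  | none => show Psi l = _ ; rw [← h]
  | some w =>
    show step (.inl w) (Psi l) = _
    rw [step, h]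
    rfl

theorem Psi_flatP (m : List (T × Option (FreeSemigroup Z))) :
    Psi (flatP m) = (none, m) := by
  induction m with
  | nil => rfl
  | cons p m ih =>
    obtain ⟨t, o⟩ := p
    rw [flatP_cons, Psi_cons, Psi_optL_append o _ (by rw [ih]), ih]
    rfl

theorem Psi_toListP (o : Option (FreeSemigroup Z)) (m : List (T × Option (FreeSemigroup Z))) :
    Psi (toListP o m) = (o, m) := by
  rw [toListP, Psi_optL_append o _ (by rw [Psi_flatP]), Psi_flatP]

theorem toListP_Psi {l : List (X (T := T) (Z := Z))} (hl : Alt l) :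
    toListP (Psi l).1 (Psi l).2 = l := by
  induction l with
  | nil => rfl
  | cons x l ih =>
    rcases x with w | t
    · have hfst : (Psi l).1 = none := by
        cases l with
        | nil => rfl
        | cons y l' =>
          rcases y with w' | t'
          · exact absurd (List.isChain_cons_cons.1 hl).1 (by simp)
          · rfl
      rw [Psi_cons, step, hfst]
      show toListP (some w) (Psi l).2 = _
      rw [toListP, optL]
      have := ih hl.tail
      rw [toListP, hfst, optL, List.nil_append] at this
      rw [this]
      rfl
    · rw [Psi_cons, step]
      show toListP none ((t, (Psi l).1) :: (Psi l).2) = _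
      rw [toListP, optL, List.nil_append, flatP_cons, ← toListP, ih hl.tail]

theorem wmul_isSome (w : FreeSemigroup Z) (o : Option (FreeSemigroup Z)) :
    (wmul w o).isSome := by cases o <;> rfl

theorem Psi_base {l : List (X (T := T) (Z := Z))} (hne : l ≠ [])
    (h : (Psi l).2 = []) : (Psi l).1.isSome := by
  cases l with
  | nil => exact absurd rfl hne
  | cons x l' =>
    rcases x with w | t
    · rw [Psi_cons, step]; exact wmul_isSome w _
    · rw [Psi_cons, step] at h; simp at h

theorem Psi_interior {l : List (X (T := T) (Z := Z))} (hl : Alt l) :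
    ∀ pr ∈ (Psi l).2.dropLast, pr.2.isSome := by
  induction l with
  | nil => intro pr h; simp [Psi] at h
  | cons x l ih =>
    rcases x with w | t
    · rw [Psi_cons, step]
      exact ih hl.tail
    · rw [Psi_cons, step]
      intro pr hpr
      rcases hm : (Psi l).2 with _ | ⟨q, m''⟩
      · simp [hm] at hpr
      · rw [hm, List.dropLast_cons_of_ne_nil (by simp), List.mem_cons] at hpr
        rcases hpr with rfl | hpr
        · show ((Psi l).1).isSome
          cases l with
          | nil => simp [Psi] at hm
          | cons y l'' =>
            rcases y with w' | t'
            · rw [Psi_cons, step]; exact wmul_isSome w' _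
            · exact absurd (List.isChain_cons_cons.1 hl).1 (by simp)
        · exact ih hl.tail pr (by rw [hm]; exact hpr)

end Parse

/-- A normal form `a₀ t₁ a₁ t₂ ⋯ tₙ aₙ` : the `tᵢ` lie in `T`, the `aᵢ` are words in `S(Z)`
or empty (`none`), the interior `a₁, …, a_{n-1}` are nonempty, and `a₀` is nonempty
when `n = 0`. -/
structure NormalForm where
  n : ℕ
  t : Fin n → T
  a : Fin (n + 1) → Option (FreeSemigroup Z)
  interior : ∀ i : Fin (n + 1), 0 < (i : ℕ) → (i : ℕ) < n → (a i).isSome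
  base : n = 0 → (a 0).isSome

/-- Evaluation of a normal form in `S̃(T ⊔ Z)` (as an element of `Option (S̃(T ⊔ Z))`;
the constraints guarantee the result is `some`). -/
def NormalForm.eval (nf : NormalForm T Z) : Option (STilde T Z) :=
  ((Option.map (ofW T Z) (nf.a 0)) ::
      (List.ofFn fun i : Fin nf.n =>
        [some (ofT T Z (nf.t i)), Option.map (ofW T Z) (nf.a i.succ)]).flatten).foldr
    optMul none

section NF
variable {T Z}

theorem cons_inl_alt (w : FreeSemigroup Z) {m' : List (X (T := T) (Z := Z))} (hm' : Alt m')
    (hhd : ∀ y l', m' = y :: l' → y.isLeft = false) : Alt (Sum.inl w :: m') := by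
  cases m' with
  | nil => exact Alt_single _
  | cons y l' => exact List.isChain_cons_cons.2 ⟨by simp [hhd y l' rfl], hm'⟩

theorem alt_flatP {m : List (T × Option (FreeSemigroup Z))}
    (h : ∀ pr ∈ m.dropLast, pr.2.isSome) :
    Alt (flatP (T := T) (Z := Z) m) ∧ ∀ y l', flatP (T := T) (Z := Z) m = y :: l' → y.isLeft = false := by
  induction m with
  | nil => exact ⟨Alt_nil, by intro y l' h'; simp [flatP] at h'⟩
  | cons p m ih =>
    obtain ⟨t, o⟩ := p
    rw [flatP_cons]
    have hm : ∀ pr ∈ m.dropLast, pr.2.isSome := by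
      intro pr hpr
      apply h
      cases m with
      | nil => simp at hpr
      | cons q m' =>
        rw [List.dropLast_cons_of_ne_nil (by simp)]
        exact List.mem_cons_of_mem _ hpr
    obtain ⟨ihm1, ihm2⟩ := ih hm
    cases o with
    | none =>
      cases m with
      | nil =>
        refine ⟨?_, ?_⟩
        · show Alt [Sum.inr t]
          exact Alt_single _
        · intro y l' h'
          rw [show optL (T := T) (Z := Z) none ++ flatP ([] : List (T × Option (FreeSemigroup Z))) = [] from rfl] at h'
          obtain ⟨rfl, -⟩ := List.cons_eq_cons.mp h'
          rfl
      | cons q m' =>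
        exfalso
        have := h (t, none) (by rw [List.dropLast_cons_of_ne_nil (by simp)]; exact List.mem_cons_self)
        simp at this
    | some w =>
      refine ⟨?_, ?_⟩
      · show Alt (Sum.inr t :: Sum.inl w :: flatP m)
        exact List.isChain_cons_cons.2 ⟨by simp, cons_inl_alt w ihm1 ihm2⟩
      · intro y l' h'
        obtain ⟨rfl, -⟩ := List.cons_eq_cons.mp h'
        rfl

theorem alt_toListP {o : Option (FreeSemigroup Z)} {m : List (T × Option (FreeSemigroup Z))}
    (h : ∀ pr ∈ m.dropLast, pr.2.isSome) : Alt (toListP (T := T) (Z := Z) o m) := by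
  obtain ⟨h1, h2⟩ := alt_flatP (T := T) (Z := Z) h
  cases o with
  | none => exact h1
  | some w => exact cons_inl_alt w h1 h2

def toP (nf : NormalForm T Z) :
    Option (FreeSemigroup Z) × List (T × Option (FreeSemigroup Z)) :=
  (nf.a 0, List.ofFn fun i => (nf.t i, nf.a i.succ))

theorem E_optL (o : Option (FreeSemigroup Z)) :
    E (optL (T := T) o) = Option.map (ofW T Z) o := by cases o <;> rfl

theorem optMul_none_right {S : Type*} [Semigroup S] (x : Option S) : optMul x none = x := by
  cases x <;> rfl

theorem F_flat (m : List (T × Option (FreeSemigroup Z))) :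
    F ((m.map fun p => [some (ofT T Z p.1), Option.map (ofW T Z) p.2]).flatten) =
      E (flatP (T := T) (Z := Z) m) := by
  induction m with
  | nil => rfl
  | cons p m ih =>
    obtain ⟨t, o⟩ := p
    rw [List.map_cons, List.flatten_cons, flatP_cons, F_append, E_cons, E_append, E_optL, ih]
    have : F [some (ofT T Z t), Option.map (ofW T Z) o] =
        optMul (some (ofT T Z t)) (Option.map (ofW T Z) o) := by
      show optMul _ (optMul _ none) = _
      rw [optMul_none_right]
    rw [this, optMul_assoc]
    rfl

theorem eval_toP (nf : NormalForm T Z) :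
    nf.eval = E (toListP (toP nf).1 (toP nf).2) := by
  unfold NormalForm.eval
  rw [show (List.ofFn fun i : Fin nf.n =>
      [some (ofT T Z (nf.t i)), Option.map (ofW T Z) (nf.a i.succ)])
      = ((List.ofFn fun i : Fin nf.n => (nf.t i, nf.a i.succ)).map
          fun p => [some (ofT T Z p.1), Option.map (ofW T Z) p.2]) by
    rw [List.map_ofFn]; rfl]
  show optMul (Option.map (ofW T Z) (nf.a 0)) (F _) = _
  rw [F_flat, toListP, E_append, E_optL]
  rfl

theorem toP_interior (nf : NormalForm T Z) :
    ∀ pr ∈ (toP nf).2.dropLast, pr.2.isSome := by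
  intro pr hpr
  unfold toP at hpr
  rw [List.mem_iff_getElem] at hpr
  obtain ⟨j, hj, hje⟩ := hpr
  have hlen : j < nf.n - 1 := by
    simpa [List.length_dropLast, List.length_ofFn] using hj
  rw [List.getElem_dropLast, List.getElem_ofFn] at hje
  subst hje
  exact nf.interior _ (by simp) (by simp only [Fin.val_succ]; omega)

theorem toP_base (nf : NormalForm T Z) :
    (toP nf).2 = [] → (toP nf).1.isSome := by
  intro h
  have hl := congrArg List.length h
  simp only [toP, List.length_ofFn, List.length_nil] at hl
  exact nf.base hl

def fromP (o : Option (FreeSemigroup Z)) (m : List (T × Option (FreeSemigroup Z)))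
    (h1 : ∀ pr ∈ m.dropLast, pr.2.isSome) (h2 : m = [] → o.isSome) :
    NormalForm T Z where
  n := m.length
  t := fun i => (m.get i).1
  a := fun i => Fin.cases o (fun j => (m.get j).2) i
  interior := by
    intro i hi0 hin
    rcases Fin.eq_zero_or_eq_succ i with rfl | ⟨j, rfl⟩
    · simp at hi0
    · simp only [Fin.cases_succ]
      apply h1
      rw [List.mem_iff_getElem]
      have hjv : (j : ℕ) + 1 < m.length := by simpa [Fin.val_succ] using hin
      have hj : (j : ℕ) < m.dropLast.length := by
        simp [List.length_dropLast]; omega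
      exact ⟨j, hj, by rw [List.getElem_dropLast]; simp⟩
  base := by
    intro h
    have := h2 (List.length_eq_zero_iff.1 h)
    simpa using this

theorem toP_fromP (o : Option (FreeSemigroup Z)) (m : List (T × Option (FreeSemigroup Z)))
    (h1 : ∀ pr ∈ m.dropLast, pr.2.isSome) (h2 : m = [] → o.isSome) :
    toP (fromP o m h1 h2) = (o, m) := by
  unfold toP fromP
  simp only [Prod.mk.injEq]
  refine ⟨by simp, ?_⟩
  have hf : (fun i : Fin m.length =>
      ((m.get i).1, Fin.cases (motive := fun _ => Option (FreeSemigroup Z)) o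
        (fun j => (m.get j).2) i.succ))
      = fun i : Fin m.length => m.get i := by
    funext i
    simp [Fin.cases_succ]
  rw [hf]
  simp [List.get_eq_getElem]

theorem toP_inj {nf₁ nf₂ : NormalForm T Z} (h : toP nf₁ = toP nf₂) :
    nf₁ = nf₂ := by
  obtain ⟨n₁, t₁, a₁, i₁, b₁⟩ := nf₁
  obtain ⟨n₂, t₂, a₂, i₂, b₂⟩ := nf₂
  unfold toP at h
  simp only [Prod.mk.injEq] at h
  obtain ⟨h1, h2⟩ := h
  have hn : n₁ = n₂ := by
    have := congrArg List.length h2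
    simpa using this
  subst hn
  have h3 : ∀ i : Fin n₁, (t₁ i, a₁ i.succ) = (t₂ i, a₂ i.succ) := by
    intro i
    have := congrArg (fun l => l[(i : ℕ)]?) h2
    simpa [List.getElem?_ofFn, List.ofFnNthVal, i.isLt] using this
  have ht : t₁ = t₂ := funext fun i => congrArg Prod.fst (h3 i)
  have ha : a₁ = a₂ := by
    funext i
    rcases Fin.eq_zero_or_eq_succ i with rfl | ⟨j, rfl⟩
    · exact h1
    · exact congrArg Prod.snd (h3 j)
  subst ht
  subst ha
  rfl

end NF

/-- Every element of `S̃(T ⊔ Z)` has a unique expression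
`a₀ t₁ a₁ t₂ ⋯ tₙ aₙ` as above. -/
theorem normalForm_unique (s : STilde T Z) :
    ∃! nf : NormalForm T Z, nf.eval = some s := by
  obtain ⟨hne, halt⟩ := d_ne_nil_alt s
  have h1 : ∀ pr ∈ (Psi (d s)).2.dropLast, pr.2.isSome := Psi_interior halt
  have h2 : (Psi (d s)).2 = [] → (Psi (d s)).1.isSome := fun h => Psi_base hne h
  refine ⟨fromP (Psi (d s)).1 (Psi (d s)).2 h1 h2, ?_, ?_⟩
  · show (fromP (Psi (d s)).1 (Psi (d s)).2 h1 h2).eval = some s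
    rw [eval_toP, toP_fromP, toListP_Psi halt, E_d]
  · intro nf hnf
    apply toP_inj
    rw [toP_fromP]
    have hd : d s = toListP (toP nf).1 (toP nf).2 :=
      d_of_E (alt_toListP (toP_interior nf)) (by rw [← eval_toP]; exact hnf)
    rw [hd, Psi_toListP]


end Stmt1
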